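/- (Theorem 3, quadratic convergence rate of the SLUB-based US algorithm.) Let Θ ⊆ ℝ be an open interval, let g : Θ → ℝ be twice continuously differentiable, let θ* ∈ Θ satisfy g(θ*) = 0 and g'(θ*) ≠ 0, and let c be a constant. Suppose (θ^(t))_{t≥0} is a sequence in Θ with θ^(t) ≠ θ* for all t, θ^(t) → θ*, and g(θ^(t)) + g'(θ^(t))(θ^(t+1) − θ^(t)) + (c/2)(θ^(t+1) − θ^(t))² = 0 for every t. Then lim_{t→∞} |θ^(t+1) − θ*| / |θ^(t) − θ*|² = |(c − g''(θ*)) / (2 g'(θ*))|; in particular this limit is finite and is positive whenever c ≠ g''(θ*). -/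

import Mathlib

open Filter Set Metric

/-- Theorem 3, quadratic convergence rate of the SLUB-based US algorithm:
for a twice continuously differentiable `g` on an open interval `Θ` with `g(θ*) = 0`,
`g'(θ*) ≠ 0`, and a US sequence `θ^(t) → θ*` (with `θ^(t) ≠ θ*`) solving the quadratic
U-equation with constant `c`, the convergence is quadratic with limit
`|(c − g''(θ*)) / (2 g'(θ*))|`, which is positive whenever `c ≠ g''(θ*)`. -/
theorem stmt_10 (Θ : Set ℝ) (hΘopen : IsOpen Θ) (hΘ : Θ.OrdConnected)
    (g g' g'' : ℝ → ℝ) (c : ℝ)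
    (hderiv : ∀ θ ∈ Θ, HasDerivAt g (g' θ) θ)
    (hderiv' : ∀ θ ∈ Θ, HasDerivAt g' (g'' θ) θ)
    (hcont'' : ContinuousOn g'' Θ)
    (θstar : ℝ) (hθstar : θstar ∈ Θ) (hroot : g θstar = 0) (hg' : g' θstar ≠ 0)
    (θ : ℕ → ℝ) (hmem : ∀ t, θ t ∈ Θ) (hne : ∀ t, θ t ≠ θstar)
    (hconv : Filter.Tendsto θ Filter.atTop (nhds θstar))
    (hiter : ∀ t, g (θ t) + g' (θ t) * (θ (t + 1) - θ t) +
      (c / 2) * (θ (t + 1) - θ t) ^ 2 = 0) :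
    Filter.Tendsto (fun t => |θ (t + 1) - θstar| / |θ t - θstar| ^ 2) Filter.atTop
      (nhds |(c - g'' θstar) / (2 * g' θstar)|) ∧
      (c ≠ g'' θstar → 0 < |(c - g'' θstar) / (2 * g' θstar)|) := by
  have he0 : ∀ t, θ t - θstar ≠ 0 := fun t => sub_ne_zero.mpr (hne t)
  have he2pos : ∀ t, (0:ℝ) < (θ t - θstar) ^ 2 := fun t =>
    lt_of_le_of_ne (sq_nonneg _) (Ne.symm (pow_ne_zero 2 (he0 t)))
  have hθ1 : Tendsto (fun t => θ (t + 1)) atTop (nhds θstar) :=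
    hconv.comp (tendsto_add_atTop_nat 1)
  have hu0 : Tendsto (fun t => θ (t + 1) - θstar) atTop (nhds 0) := by
    simpa using hθ1.sub (tendsto_const_nhds (x := θstar))
  have he0' : Tendsto (fun t => θ t - θstar) atTop (nhds 0) := by
    simpa using hconv.sub (tendsto_const_nhds (x := θstar))
  have hg'c : Tendsto (fun t => g' (θ t)) atTop (nhds (g' θstar)) :=
    ((hderiv' θstar hθstar).continuousAt.tendsto).comp hconv
  -- the denominator sequence
  set D : ℕ → ℝ := fun t =>
    g' (θ t) - c * (θ t - θstar) + c / 2 * (θ (t + 1) - θstar) with hDdef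
  have hD : Tendsto D atTop (nhds (g' θstar)) := by
    have h1 := (hg'c.sub (he0'.const_mul c)).add (hu0.const_mul (c / 2))
    simpa using h1
  set A : ℕ → ℝ := fun t =>
    g (θ t) - g' (θ t) * (θ t - θstar) + c / 2 * (θ t - θstar) ^ 2 with hAdef
  have hident : ∀ t, (θ (t + 1) - θstar) * D t = -(A t) := by
    intro t
    simp only [hDdef, hAdef]
    linear_combination hiter t
  -- slope limit for g'
  have hne' : Tendsto θ atTop (nhdsWithin θstar {θstar}ᶜ) := by
    rw [tendsto_nhdsWithin_iff]
    exact ⟨hconv, Filter.Eventually.of_forall fun t => hne t⟩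
  -- Taylor remainder functions
  set h : ℝ → ℝ := fun x =>
    g x - g' θstar * (x - θstar) - g'' θstar / 2 * (x - θstar) ^ 2 with hhdef
  set H : ℝ → ℝ := fun x => g' x - g' θstar - g'' θstar * (x - θstar) with hHdef
  have hhθ : h θstar = 0 := by simp [hhdef, hroot]
  have hlin : ∀ (a x : ℝ), HasDerivAt (fun y => a * (y - θstar)) a x := by
    intro a x
    simpa using ((hasDerivAt_id x).sub_const θstar).const_mul a
  have hquad : ∀ x : ℝ,
      HasDerivAt (fun y => g'' θstar / 2 * (y - θstar) ^ 2) (g'' θstar * (x - θstar)) x := by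
    intro x
    have h2 : HasDerivAt (fun y : ℝ => (y - θstar) ^ 2) (2 * (x - θstar)) x := by
      simpa using ((hasDerivAt_id x).sub_const θstar).fun_pow 2
    have := h2.const_mul (g'' θstar / 2)
    exact this.congr_deriv (by ring)
  have hhd : ∀ x ∈ Θ, HasDerivAt h (H x) x := by
    intro x hx
    have := ((hderiv x hx).fun_sub (hlin (g' θstar) x)).fun_sub (hquad x)
    simpa [hhdef, hHdef] using this
  have hH0 : HasDerivAt H 0 θstar := by
    have := ((hderiv' θstar hθstar).sub_const (g' θstar)).fun_sub (hlin (g'' θstar) θstar)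
    simpa [hHdef] using this
  have hHθ : H θstar = 0 := by simp [hHdef]
  have hQ : Tendsto (fun t => H (θ t) / (θ t - θstar)) atTop (nhds 0) := by
    have hs : Tendsto (fun t => slope g' θstar (θ t)) atTop (nhds (g'' θstar)) :=
      (hasDerivAt_iff_tendsto_slope.mp (hderiv' θstar hθstar)).comp hne'
    have h2 := hs.sub (tendsto_const_nhds (x := g'' θstar))
    simp only [sub_self] at h2
    refine h2.congr fun t => ?_
    simp only [hHdef]
    rw [slope_def_field]
    field_simp [he0 t]
  have hlitt : (fun x => H x) =o[nhds θstar] fun x => x - θstar := by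
    have := hasDerivAt_iff_isLittleO.mp hH0
    simpa [hHθ] using this
  -- the little-o part: h (θ t) / e t ^ 2 → 0
  have hP : Tendsto (fun t => h (θ t) / (θ t - θstar) ^ 2) atTop (nhds 0) := by
    rw [NormedAddCommGroup.tendsto_nhds_zero]
    intro ε hε
    have hεhalf : (0:ℝ) < ε / 2 := half_pos hε
    have hev1 : ∀ᶠ x in nhds θstar, ‖H x‖ ≤ ε / 2 * ‖x - θstar‖ := hlitt.def hεhalf
    obtain ⟨δ, hδ, hball⟩ := Metric.eventually_nhds_iff.mp hev1
    have hev2 : ∀ᶠ t in atTop, dist (θ t) θstar < δ := (Metric.tendsto_nhds.mp hconv) δ hδ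
    filter_upwards [hev2] with t ht
    have hseg : Set.uIcc θstar (θ t) ⊆ Θ := hΘ.uIcc_subset hθstar (hmem t)
    have hbd : ∀ x ∈ Set.uIcc θstar (θ t), ‖H x‖ ≤ ε / 2 * |θ t - θstar| := by
      intro x hx
      have hx1 : |x - θstar| ≤ |θ t - θstar| := by
        rcases le_total θstar (θ t) with hc | hc
        · rw [Set.uIcc_of_le hc] at hx
          rw [abs_of_nonneg (by linarith [hx.1]), abs_of_nonneg (by linarith)]
          linarith [hx.2]
        · rw [Set.uIcc_of_ge hc] at hx
          rw [abs_of_nonpos (by linarith [hx.2]), abs_of_nonpos (by linarith)]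
          linarith [hx.1]
      have hxδ : dist x θstar < δ := by
        rw [Real.dist_eq]
        exact lt_of_le_of_lt hx1 (by rwa [Real.dist_eq] at ht)
      calc ‖H x‖ ≤ ε / 2 * ‖x - θstar‖ := hball hxδ
        _ ≤ ε / 2 * |θ t - θstar| := by
            rw [Real.norm_eq_abs]
            exact mul_le_mul_of_nonneg_left hx1 (le_of_lt hεhalf)
    have hMVT : ‖h (θ t) - h θstar‖ ≤ ε / 2 * |θ t - θstar| * ‖θ t - θstar‖ :=
      Convex.norm_image_sub_le_of_norm_hasDerivWithin_le
        (fun x hx => (hhd x (hseg hx)).hasDerivWithinAt) hbd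
        (convex_uIcc θstar (θ t)) Set.left_mem_uIcc Set.right_mem_uIcc
    have hb : |h (θ t)| ≤ ε / 2 * (θ t - θstar) ^ 2 := by
      rw [hhθ, sub_zero, Real.norm_eq_abs, Real.norm_eq_abs, mul_assoc,
        abs_mul_abs_self] at hMVT
      simpa [sq] using hMVT
    rw [Real.norm_eq_abs, abs_div, abs_of_nonneg (sq_nonneg (θ t - θstar))]
    calc |h (θ t)| / (θ t - θstar) ^ 2 ≤ ε / 2 := by
          rw [div_le_iff₀ (he2pos t)]
          exact hb
      _ < ε := half_lt_self hε
  -- limit of A / e^2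
  have hAfor : ∀ t, A t / (θ t - θstar) ^ 2 =
      h (θ t) / (θ t - θstar) ^ 2 - H (θ t) / (θ t - θstar) + (c - g'' θstar) / 2 := by
    intro t
    simp only [hAdef, hhdef, hHdef]
    field_simp [he0 t]
    ring
  have hA : Tendsto (fun t => A t / (θ t - θstar) ^ 2) atTop
      (nhds ((c - g'' θstar) / 2)) := by
    have h3 := (hP.sub hQ).add_const ((c - g'' θstar) / 2)
    simp only [sub_zero, zero_add] at h3
    exact h3.congr fun t => (hAfor t).symm
  -- conclude
  have hDne : ∀ᶠ t in atTop, D t ≠ 0 := hD.eventually_ne hg'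
  have hr : Tendsto (fun t => (θ (t + 1) - θstar) / (θ t - θstar) ^ 2) atTop
      (nhds (-((c - g'' θstar) / 2) / g' θstar)) := by
    have hdiv := (hA.neg).div hD hg'
    refine hdiv.congr' ?_
    filter_upwards [hDne] with t ht
    have hu : θ (t + 1) - θstar = -A t / D t := by
      rw [eq_div_iff ht]
      exact hident t
    simp only [Pi.div_apply]
    rw [hu, ← neg_div, div_right_comm]
  have habs := hr.abs
  have hlimeq : |-((c - g'' θstar) / 2) / g' θstar| = |(c - g'' θstar) / (2 * g' θstar)| := by
    rw [show -((c - g'' θstar) / 2) / g' θstar = -((c - g'' θstar) / (2 * g' θstar)) by ring,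
      abs_neg]
  rw [hlimeq] at habs
  constructor
  · refine habs.congr fun t => ?_
    rw [abs_div, abs_pow, sq_abs]
  · intro hc
    exact abs_pos.mpr (div_ne_zero (sub_ne_zero.mpr (Ne.symm hc).symm)
      (mul_ne_zero two_ne_zero hg'))
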